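/- Let u : ℤ × ℤ → ℂ satisfy (u_{n+1,m+1}+1)(u_{n,m+1}-1) = (u_{n+1,m}+1)(u_{n,m}-1) for all n,m ∈ ℤ, and assume u_{n,m+3} ≠ u_{n,m+2} and u_{n,m+1} ≠ u_{n,m} for all n,m ∈ ℤ. Then the cross-ratio W_{n,m} = ((u_{n,m+3}-u_{n,m+1})(u_{n,m+2}-u_{n,m})) / ((u_{n,m+3}-u_{n,m+2})(u_{n,m+1}-u_{n,m})) satisfies W_{n+1,m} = W_{n,m} for all n,m ∈ ℤ. -/
import Mathlib

lemma cross_key (a0 a1 a2 a3 b0 b1 b2 b3 : ℂ)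
    (h01 : (b1+1)*(a1-1) = (b0+1)*(a0-1))
    (h12 : (b2+1)*(a2-1) = (b1+1)*(a1-1))
    (h23 : (b3+1)*(a3-1) = (b2+1)*(a2-1))
    (ha32 : a3 ≠ a2) (ha21 : a2 ≠ a1) (ha10 : a1 ≠ a0)
    (hb32 : b3 ≠ b2) (hb21 : b2 ≠ b1) (hb10 : b1 ≠ b0) :
    ((b3-b1)*(b2-b0))/((b3-b2)*(b1-b0)) = ((a3-a1)*(a2-a0))/((a3-a2)*(a1-a0)) := by
  by_cases ha0 : a0 = 1
  · -- a0 = 1 ⟹ b1 = -1 ⟹ a2 = 1 ⟹ b3 = -1 = b1; both sides vanish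
    have ha1 : a1 ≠ 1 := ha0 ▸ ha10
    have hb1 : b1 = -1 := by
      have h : (b1+1)*(a1-1) = 0 := by rw [h01, ha0]; ring
      have := (mul_eq_zero.mp h).resolve_right (sub_ne_zero_of_ne ha1)
      linear_combination this
    have ha2 : a2 = 1 := by
      by_contra ha2
      have h : (b2+1)*(a2-1) = 0 := by rw [h12, hb1]; ring
      have hb2 := (mul_eq_zero.mp h).resolve_right (sub_ne_zero_of_ne ha2)
      exact hb21 (by linear_combination hb2 - hb1)
    have ha3 : a3 ≠ 1 := ha2 ▸ ha32
    have hb3 : b3 = -1 := by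
      have h : (b3+1)*(a3-1) = 0 := by rw [h23, ha2]; ring
      have := (mul_eq_zero.mp h).resolve_right (sub_ne_zero_of_ne ha3)
      linear_combination this
    rw [show b3 - b1 = 0 by rw [hb1, hb3]; ring, show a2 - a0 = 0 by rw [ha0, ha2]; ring]
    simp
  · by_cases ha1 : a1 = 1
    · -- a1 = 1 ⟹ b0 = -1, b2 = -1, a3 = 1; both sides vanish
      have hb0 : b0 = -1 := by
        have h : (b0+1)*(a0-1) = 0 := by rw [← h01, ha1]; ring
        have := (mul_eq_zero.mp h).resolve_right (sub_ne_zero_of_ne ha0)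
        linear_combination this
      have ha2 : a2 ≠ 1 := ha1 ▸ ha21
      have hb2 : b2 = -1 := by
        have h : (b2+1)*(a2-1) = 0 := by rw [h12, ha1]; ring
        have := (mul_eq_zero.mp h).resolve_right (sub_ne_zero_of_ne ha2)
        linear_combination this
      have ha3 : a3 = 1 := by
        by_contra ha3
        have h : (b3+1)*(a3-1) = 0 := by rw [h23, hb2]; ring
        have hb3 := (mul_eq_zero.mp h).resolve_right (sub_ne_zero_of_ne ha3)
        exact hb32 (by linear_combination hb3 - hb2)
      rw [show b2 - b0 = 0 by rw [hb0, hb2]; ring, show a3 - a1 = 0 by rw [ha1, ha3]; ring]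
      simp
    · -- main case: a0 ≠ 1, a1 ≠ 1, and we show a2 ≠ 1, a3 ≠ 1
      have ha2 : a2 ≠ 1 := by
        intro ha2
        have h : (b1+1)*(a1-1) = 0 := by rw [← h12, ha2]; ring
        have hb1 := (mul_eq_zero.mp h).resolve_right (sub_ne_zero_of_ne ha1)
        have h' : (b0+1)*(a0-1) = 0 := by rw [← h01]; exact h
        have hb0 := (mul_eq_zero.mp h').resolve_right (sub_ne_zero_of_ne ha0)
        exact hb10 (by linear_combination hb1 - hb0)
      have ha3 : a3 ≠ 1 := by
        intro ha3
        have h : (b2+1)*(a2-1) = 0 := by rw [← h23, ha3]; ring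
        have hb2 := (mul_eq_zero.mp h).resolve_right (sub_ne_zero_of_ne ha2)
        have h' : (b1+1)*(a1-1) = 0 := by rw [← h12]; exact h
        have hb1 := (mul_eq_zero.mp h').resolve_right (sub_ne_zero_of_ne ha1)
        exact hb21 (by linear_combination hb2 - hb1)
      have d0 : a0 - 1 ≠ 0 := sub_ne_zero_of_ne ha0
      have d1 : a1 - 1 ≠ 0 := sub_ne_zero_of_ne ha1
      have d2 : a2 - 1 ≠ 0 := sub_ne_zero_of_ne ha2
      have d3 : a3 - 1 ≠ 0 := sub_ne_zero_of_ne ha3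
      set c : ℂ := (b0+1)*(a0-1) with hc
      have hcne : c ≠ 0 := by
        intro h0
        have hb0 : b0 + 1 = 0 :=
          (mul_eq_zero.mp (by rw [← hc]; exact h0)).resolve_right d0
        have hb1 : b1 + 1 = 0 :=
          (mul_eq_zero.mp (h01.trans h0)).resolve_right d1
        exact hb10 (by linear_combination hb1 - hb0)
      have h2c : (b2+1)*(a2-1) = c := h12.trans h01
      have h3c : (b3+1)*(a3-1) = c := h23.trans h2c
      have p1 : (b1 - b0)*((a1-1)*(a0-1)) = c*(a0-a1) := by
        linear_combination (a0-1)*h01 + (a1-1)*hc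
      have p2 : (b2 - b0)*((a2-1)*(a0-1)) = c*(a0-a2) := by
        linear_combination (a0-1)*h2c + (a2-1)*hc
      have p3 : (b3 - b1)*((a3-1)*(a1-1)) = c*(a1-a3) := by
        linear_combination (a1-1)*h3c - (a3-1)*h01
      have p4 : (b3 - b2)*((a3-1)*(a2-1)) = c*(a2-a3) := by
        linear_combination (a2-1)*h3c - (a3-1)*h2c
      have e1 : b1 - b0 = c*(a0-a1)/((a1-1)*(a0-1)) :=
        (eq_div_iff (mul_ne_zero d1 d0)).mpr p1
      have e2 : b2 - b0 = c*(a0-a2)/((a2-1)*(a0-1)) :=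
        (eq_div_iff (mul_ne_zero d2 d0)).mpr p2
      have e3 : b3 - b1 = c*(a1-a3)/((a3-1)*(a1-1)) :=
        (eq_div_iff (mul_ne_zero d3 d1)).mpr p3
      have e4 : b3 - b2 = c*(a2-a3)/((a3-1)*(a2-1)) :=
        (eq_div_iff (mul_ne_zero d3 d2)).mpr p4
      rw [e1, e2, e3, e4]
      have n32 : a3 - a2 ≠ 0 := sub_ne_zero_of_ne ha32
      have n10 : a1 - a0 ≠ 0 := sub_ne_zero_of_ne ha10
      have n23 : a2 - a3 ≠ 0 := fun h => n32 (by linear_combination -h)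
      have n01 : a0 - a1 ≠ 0 := fun h => n10 (by linear_combination -h)
      field_simp
      ring



/-- For the lattice equation with `θ = 1`, the cross-ratio
`W_{n,m} = ((u_{n,m+3}-u_{n,m+1})(u_{n,m+2}-u_{n,m}))/((u_{n,m+3}-u_{n,m+2})(u_{n,m+1}-u_{n,m}))`
is a first integral in the m-direction: `W_{n+1,m} = W_{n,m}`. -/
theorem stmt_2 (u : ℤ → ℤ → ℂ)
    (heq : ∀ n m : ℤ,
      (u (n + 1) (m + 1) + 1) * (u n (m + 1) - 1)
        = (u (n + 1) m + 1) * (u n m - 1))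
    (hne1 : ∀ n m : ℤ, u n (m + 3) ≠ u n (m + 2))
    (hne2 : ∀ n m : ℤ, u n (m + 1) ≠ u n m) :
    ∀ n m : ℤ,
      ((u (n + 1) (m + 3) - u (n + 1) (m + 1)) * (u (n + 1) (m + 2) - u (n + 1) m))
          / ((u (n + 1) (m + 3) - u (n + 1) (m + 2)) * (u (n + 1) (m + 1) - u (n + 1) m))
        = ((u n (m + 3) - u n (m + 1)) * (u n (m + 2) - u n m))
          / ((u n (m + 3) - u n (m + 2)) * (u n (m + 1) - u n m)) := by
  intro n m
  have h01 := heq n m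
  have h12 := heq n (m+1)
  have h23 := heq n (m+2)
  simp only [show (m:ℤ)+1+1 = m+2 by ring, show (m:ℤ)+2+1 = m+3 by ring] at h12 h23
  exact cross_key (u n m) (u n (m+1)) (u n (m+2)) (u n (m+3))
    (u (n+1) m) (u (n+1) (m+1)) (u (n+1) (m+2)) (u (n+1) (m+3))
    h01 h12 h23 (hne1 n m)
    (by have := hne2 n (m+1); simpa [show (m:ℤ)+1+1 = m+2 by ring] using this)
    (hne2 n m) (hne1 (n+1) m)
    (by have := hne2 (n+1) (m+1); simpa [show (m:ℤ)+1+1 = m+2 by ring] using this)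
    (hne2 (n+1) m)
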